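/- Let τ ∈ {1, −1} and let λ ∈ ℝ be an eigenvalue of the Hermitian matrix K_p(τ) of multiplicity 2m. Then the characteristic polynomial of the monodromy matrix M_p(λ) equals (X − τ)^{2m}; that is, every eigenvalue of M_p(λ) equals τ. -/

import Mathlib

open Matrix ComplexOrder Polynomial

/-- The `pm × pm` block matrix `K_p(τ)` (blocks indexed by `Fin p`, entries inside a block by
`Fin m`; block row/column `j : Fin p` corresponds to the `1`-based index `j+1`):
the `j`-th diagonal block is `b_j`, the `(j, j+1)` and `(j+1, j)` blocks are `a_j` for
`j = 1, …, p−1`, the `(1, p)` block is `τ⁻¹ a_p`, the `(p, 1)` block is `τ a_p`, and the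
remaining blocks vanish (for `p = 2` the overlapping contributions add up). -/
noncomputable def Kmat (p m : ℕ) (a b : ℕ → Matrix (Fin m) (Fin m) ℂ) (τ : ℂ) :
    Matrix (Fin p × Fin m) (Fin p × Fin m) ℂ :=
  Matrix.of fun x y =>
    (if (x.1 : ℕ) = (y.1 : ℕ) then b ((x.1 : ℕ) + 1) x.2 y.2 else 0)
    + (if (y.1 : ℕ) = (x.1 : ℕ) + 1 then a ((x.1 : ℕ) + 1) x.2 y.2 else 0)
    + (if (x.1 : ℕ) = (y.1 : ℕ) + 1 then a ((y.1 : ℕ) + 1) x.2 y.2 else 0)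
    + (if (x.1 : ℕ) = 0 ∧ (y.1 : ℕ) = p - 1 then τ⁻¹ * a p x.2 y.2 else 0)
    + (if (x.1 : ℕ) = p - 1 ∧ (y.1 : ℕ) = 0 then τ * a p x.2 y.2 else 0)

/-- The matrix-valued solution `(y_n)_{n ∈ ℕ}` of the Jacobi recursion
`a_n y_{n+1} + b_n y_n + a_{n−1} y_{n−1} = z y_n` (for `n ≥ 1`) with initial data
`y_0, y_1` (here `a, b : ℕ → _` are the `p`-periodic coefficient sequences, so that
`a 0 = a p`, etc.). -/
noncomputable def sol {m : ℕ} (a b : ℕ → Matrix (Fin m) (Fin m) ℂ) (z : ℂ)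
    (y0 y1 : Matrix (Fin m) (Fin m) ℂ) : ℕ → Matrix (Fin m) (Fin m) ℂ
  | 0 => y0
  | 1 => y1
  | n + 2 =>
      (a (n + 1))⁻¹ *
        (z • sol a b z y0 y1 (n + 1) - b (n + 1) * sol a b z y0 y1 (n + 1)
          - a n * sol a b z y0 y1 n)

/-- The fundamental solution `φ_n(z)` with `φ_0 = 0`, `φ_1 = I_m`. -/
noncomputable def phi {m : ℕ} (a b : ℕ → Matrix (Fin m) (Fin m) ℂ) (z : ℂ) :
    ℕ → Matrix (Fin m) (Fin m) ℂ :=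
  sol a b z 0 1

/-- The fundamental solution `ϑ_n(z)` with `ϑ_0 = I_m`, `ϑ_1 = 0`. -/
noncomputable def theta {m : ℕ} (a b : ℕ → Matrix (Fin m) (Fin m) ℂ) (z : ℂ) :
    ℕ → Matrix (Fin m) (Fin m) ℂ :=
  sol a b z 1 0

/-- The `2m × 2m` monodromy matrix `M_p(z) = [[ϑ_p(z), φ_p(z)], [ϑ_{p+1}(z), φ_{p+1}(z)]]`. -/
noncomputable def Mmat (p : ℕ) {m : ℕ} (a b : ℕ → Matrix (Fin m) (Fin m) ℂ) (z : ℂ) :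
    Matrix (Fin m ⊕ Fin m) (Fin m ⊕ Fin m) ℂ :=
  Matrix.fromBlocks (theta a b z p) (phi a b z p) (theta a b z (p + 1)) (phi a b z (p + 1))

lemma sol_rec {m : ℕ} (a b : ℕ → Matrix (Fin m) (Fin m) ℂ) (ha : ∀ n, IsUnit (a n))
    (z : ℂ) (y0 y1 : Matrix (Fin m) (Fin m) ℂ) (n : ℕ) :
    a (n + 1) * sol a b z y0 y1 (n + 2) =
      z • sol a b z y0 y1 (n + 1) - b (n + 1) * sol a b z y0 y1 (n + 1)
        - a n * sol a b z y0 y1 n := by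
  conv_lhs => rw [sol]
  rw [← mul_assoc, Matrix.mul_nonsing_inv _ ((Matrix.isUnit_iff_isUnit_det _).mp (ha _)), one_mul]

lemma sol_unique {m : ℕ} (a b : ℕ → Matrix (Fin m) (Fin m) ℂ) (ha : ∀ n, IsUnit (a n))
    (z : ℂ) (N : ℕ) (Y : ℕ → Fin m → ℂ)
    (hrec : ∀ n, 1 ≤ n → n ≤ N →
      a n *ᵥ Y (n + 1) + b n *ᵥ Y n + a (n - 1) *ᵥ Y (n - 1) = z • Y n) :
    ∀ n, n ≤ N + 1 → Y n = theta a b z n *ᵥ Y 0 + phi a b z n *ᵥ Y 1 := by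
  intro n
  induction n using Nat.strong_induction_on with
  | _ n IH =>
    match n with
    | 0 => intro _; simp [theta, phi, sol]
    | 1 => intro _; simp [theta, phi, sol]
    | (n+2) =>
      intro hn
      have h1 := IH (n+1) (by omega) (by omega)
      have h0 := IH n (by omega) (by omega)
      have hr := hrec (n+1) (by omega) (by omega)
      simp only [Nat.add_sub_cancel] at hr
      apply Matrix.mulVec_injective_iff_isUnit.mpr (ha (n+1))
      show a (n+1) *ᵥ Y (n+2) = a (n+1) *ᵥ _
      have hA : a (n+1) *ᵥ Y (n+2) = z • Y (n+1) - b (n+1) *ᵥ Y (n+1) - a n *ᵥ Y n := by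
        rw [← hr]; abel
      have e1 := sol_rec a b ha z 1 0 n
      have e2 := sol_rec a b ha z 0 1 n
      simp only [theta, phi] at h0 h1 ⊢
      rw [hA, h1, h0]
      conv_rhs => rw [Matrix.mulVec_add, Matrix.mulVec_mulVec, Matrix.mulVec_mulVec, e1, e2]
      simp only [Matrix.sub_mulVec, Matrix.add_mulVec, Matrix.mulVec_add,
        Matrix.smul_mulVec, Matrix.mulVec_smul, Matrix.mulVec_mulVec, smul_add]
      abel

lemma sum_block {p m : ℕ} (P : Fin p → Prop) [DecidablePred P]
    (F : Fin p → Matrix (Fin m) (Fin m) ℂ) (v : Fin p × Fin m → ℂ) (i1 : Fin m)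
    (k0 : Fin p) (hP : ∀ k, P k ↔ k = k0) :
    ∑ y : Fin p × Fin m, (if P y.1 then F y.1 i1 y.2 else 0) * v y
      = (F k0 *ᵥ fun i => v (k0, i)) i1 := by
  rw [Fintype.sum_prod_type]
  rw [Finset.sum_eq_single k0]
  · simp [Matrix.mulVec, dotProduct, hP]
  · intro k _ hk; simp [hP, hk]
  · simp

lemma sum_block0 {p m : ℕ} (P : Fin p → Prop) [DecidablePred P]
    (F : Fin p → Matrix (Fin m) (Fin m) ℂ) (v : Fin p × Fin m → ℂ) (i1 : Fin m)
    (hP : ∀ k, ¬ P k) :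
    ∑ y : Fin p × Fin m, (if P y.1 then F y.1 i1 y.2 else 0) * v y = 0 := by
  simp [hP]

lemma row_eq {p m : ℕ} (hp : 2 ≤ p) (a b : ℕ → Matrix (Fin m) (Fin m) ℂ) (τ z : ℂ)
    (v : Fin p × Fin m → ℂ) (hv : Kmat p m a b τ *ᵥ v = z • v) (j : Fin p) :
    (b ((j:ℕ)+1) *ᵥ fun i => v (j, i))
    + (if h : (j:ℕ)+1 < p then a ((j:ℕ)+1) *ᵥ (fun i => v (⟨(j:ℕ)+1, h⟩, i)) else 0)
    + (if 0 < (j:ℕ) then a (j:ℕ) *ᵥ (fun i => v (⟨(j:ℕ)-1, lt_of_le_of_lt (Nat.sub_le _ _) j.2⟩, i)) else 0)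
    + (if (j:ℕ) = 0 then τ⁻¹ • (a p *ᵥ fun i => v (⟨p-1, by omega⟩, i)) else 0)
    + (if (j:ℕ) = p-1 then τ • (a p *ᵥ fun i => v (⟨0, by omega⟩, i)) else 0)
    = z • fun i => v (j, i) := by
  funext i1
  have h := congrFun hv (j, i1)
  rw [Matrix.mulVec, dotProduct] at h
  simp only [Kmat, Matrix.of_apply, add_mul, Finset.sum_add_distrib] at h
  
  clear hv
  have hjlt : (j:ℕ) < p := j.2
  have t1 : ∑ x : Fin p × Fin m, (if (j:ℕ) = (x.1:ℕ) then b (↑j + 1) i1 x.2 else 0) * v x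
      = (b ((j:ℕ)+1) *ᵥ fun i => v (j, i)) i1 :=
    sum_block (fun k => (j:ℕ) = (k:ℕ)) (fun _ => b ((j:ℕ)+1)) v i1 j
      (fun k => by simp [Fin.ext_iff, eq_comm])
  rw [t1] at h
  by_cases hj0 : (j:ℕ) = 0
  · -- j = 0 : t2 present, t3 absent, t4 present, t5 absent
    have hA2 : (j:ℕ) + 1 < p := by omega
    have t2 : ∑ x : Fin p × Fin m, (if (x.1:ℕ) = (j:ℕ) + 1 then a (↑j + 1) i1 x.2 else 0) * v x
        = (a ((j:ℕ)+1) *ᵥ fun i => v (⟨(j:ℕ)+1, hA2⟩, i)) i1 :=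
      sum_block (fun k => (k:ℕ) = (j:ℕ)+1) (fun _ => a ((j:ℕ)+1)) v i1 ⟨(j:ℕ)+1, hA2⟩
        (fun k => by simp [Fin.ext_iff])
    have t3 : ∑ x : Fin p × Fin m, (if (j:ℕ) = (x.1:ℕ) + 1 then a ((x.1:ℕ) + 1) i1 x.2 else 0) * v x = 0 :=
      sum_block0 (fun k => (j:ℕ) = (k:ℕ)+1) (fun k => a ((k:ℕ)+1)) v i1 (fun k => by omega)
    have t4 : ∑ x : Fin p × Fin m, (if (j:ℕ) = 0 ∧ (x.1:ℕ) = p - 1 then τ⁻¹ * a p i1 x.2 else 0) * v x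
        = ((τ⁻¹ • a p) *ᵥ fun i => v (⟨p-1, by omega⟩, i)) i1 :=
      sum_block (fun k => (j:ℕ) = 0 ∧ (k:ℕ) = p-1) (fun _ => τ⁻¹ • a p) v i1 ⟨p-1, by omega⟩
        (fun k => by simp [hj0, Fin.ext_iff])
    have t5 : ∑ x : Fin p × Fin m, (if (j:ℕ) = p - 1 ∧ (x.1:ℕ) = 0 then τ * a p i1 x.2 else 0) * v x = 0 :=
      sum_block0 (fun k => (j:ℕ) = p-1 ∧ (k:ℕ) = 0) (fun _ => τ • a p) v i1
        (fun k => by intro hk; omega)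
    rw [t2, t3, t4, t5, Matrix.smul_mulVec] at h
    rw [dif_pos hA2, if_neg (by omega : ¬ 0 < (j:ℕ)), if_pos hj0,
      if_neg (by omega : ¬ (j:ℕ) = p - 1)]
    simp only [Pi.add_apply, Pi.zero_apply, Pi.smul_apply, smul_eq_mul] at h ⊢
    exact h
  · by_cases hjp : (j:ℕ) = p - 1
    · -- j = p-1 : t2 absent, t3 present, t4 absent, t5 present
      have t2 : ∑ x : Fin p × Fin m, (if (x.1:ℕ) = (j:ℕ) + 1 then a (↑j + 1) i1 x.2 else 0) * v x = 0 :=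
        sum_block0 (fun k => (k:ℕ) = (j:ℕ)+1) (fun _ => a ((j:ℕ)+1)) v i1
          (fun k => by have := k.isLt; omega)
      have t3 : ∑ x : Fin p × Fin m, (if (j:ℕ) = (x.1:ℕ) + 1 then a ((x.1:ℕ) + 1) i1 x.2 else 0) * v x
          = (a (((j:ℕ)-1)+1) *ᵥ fun i => v (⟨(j:ℕ)-1, lt_of_le_of_lt (Nat.sub_le _ _) j.2⟩, i)) i1 :=
        sum_block (fun k => (j:ℕ) = (k:ℕ)+1) (fun k => a ((k:ℕ)+1)) v i1
          ⟨(j:ℕ)-1, lt_of_le_of_lt (Nat.sub_le _ _) j.2⟩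
          (fun k => by have := k.isLt; simp only [Fin.ext_iff]; omega)
      have t4 : ∑ x : Fin p × Fin m, (if (j:ℕ) = 0 ∧ (x.1:ℕ) = p - 1 then τ⁻¹ * a p i1 x.2 else 0) * v x = 0 :=
        sum_block0 (fun k => (j:ℕ) = 0 ∧ (k:ℕ) = p-1) (fun _ => τ⁻¹ • a p) v i1
          (fun k => by intro hk; omega)
      have t5 : ∑ x : Fin p × Fin m, (if (j:ℕ) = p - 1 ∧ (x.1:ℕ) = 0 then τ * a p i1 x.2 else 0) * v x
          = ((τ • a p) *ᵥ fun i => v (⟨0, by omega⟩, i)) i1 :=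
        sum_block (fun k => (j:ℕ) = p-1 ∧ (k:ℕ) = 0) (fun _ => τ • a p) v i1 ⟨0, by omega⟩
          (fun k => by simp [hjp, Fin.ext_iff])
      have hj1 : (j:ℕ) - 1 + 1 = (j:ℕ) := by omega
      rw [hj1] at t3
      rw [t2, t3, t4, t5, Matrix.smul_mulVec] at h
      rw [dif_neg (by omega : ¬ (j:ℕ) + 1 < p), if_pos (by omega : 0 < (j:ℕ)),
        if_neg hj0, if_pos hjp]
      simp only [Pi.add_apply, Pi.zero_apply, Pi.smul_apply, smul_eq_mul] at h ⊢
      exact h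
    · -- middle : t2 present, t3 present, t4 absent, t5 absent
      have hA2 : (j:ℕ) + 1 < p := by omega
      have t2 : ∑ x : Fin p × Fin m, (if (x.1:ℕ) = (j:ℕ) + 1 then a (↑j + 1) i1 x.2 else 0) * v x
          = (a ((j:ℕ)+1) *ᵥ fun i => v (⟨(j:ℕ)+1, hA2⟩, i)) i1 :=
        sum_block (fun k => (k:ℕ) = (j:ℕ)+1) (fun _ => a ((j:ℕ)+1)) v i1 ⟨(j:ℕ)+1, hA2⟩
          (fun k => by simp [Fin.ext_iff])
      have t3 : ∑ x : Fin p × Fin m, (if (j:ℕ) = (x.1:ℕ) + 1 then a ((x.1:ℕ) + 1) i1 x.2 else 0) * v x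
          = (a (((j:ℕ)-1)+1) *ᵥ fun i => v (⟨(j:ℕ)-1, lt_of_le_of_lt (Nat.sub_le _ _) j.2⟩, i)) i1 :=
        sum_block (fun k => (j:ℕ) = (k:ℕ)+1) (fun k => a ((k:ℕ)+1)) v i1
          ⟨(j:ℕ)-1, lt_of_le_of_lt (Nat.sub_le _ _) j.2⟩
          (fun k => by have := k.isLt; simp only [Fin.ext_iff]; omega)
      have t4 : ∑ x : Fin p × Fin m, (if (j:ℕ) = 0 ∧ (x.1:ℕ) = p - 1 then τ⁻¹ * a p i1 x.2 else 0) * v x = 0 :=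
        sum_block0 (fun k => (j:ℕ) = 0 ∧ (k:ℕ) = p-1) (fun _ => τ⁻¹ • a p) v i1
          (fun k => by intro hk; omega)
      have t5 : ∑ x : Fin p × Fin m, (if (j:ℕ) = p - 1 ∧ (x.1:ℕ) = 0 then τ * a p i1 x.2 else 0) * v x = 0 :=
        sum_block0 (fun k => (j:ℕ) = p-1 ∧ (k:ℕ) = 0) (fun _ => τ • a p) v i1
          (fun k => by intro hk; omega)
      have hj1 : (j:ℕ) - 1 + 1 = (j:ℕ) := by omega
      rw [hj1] at t3
      rw [t2, t3, t4, t5] at h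
      rw [dif_pos hA2, if_pos (by omega : 0 < (j:ℕ)), if_neg hj0, if_neg hjp]
      simp only [Pi.add_apply, Pi.zero_apply, Pi.smul_apply, smul_eq_mul] at h ⊢
      exact h

lemma key {p m : ℕ} (hp : 2 ≤ p) (a b : ℕ → Matrix (Fin m) (Fin m) ℂ)
    (hper : ∀ n, a (n + p) = a n ∧ b (n + p) = b n)
    (haU : ∀ n, IsUnit (a n)) (τ z : ℂ) (hτ0 : τ ≠ 0)
    (v : Fin p × Fin m → ℂ) (hv : Kmat p m a b τ *ᵥ v = z • v) :
    (Mmat p a b z *ᵥ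
        Sum.elim (τ⁻¹ • fun i => v (⟨p-1, by omega⟩, i)) (fun i => v (⟨0, by omega⟩, i))
      = τ • Sum.elim (τ⁻¹ • fun i => v (⟨p-1, by omega⟩, i)) (fun i => v (⟨0, by omega⟩, i)))
    ∧ ((Sum.elim (τ⁻¹ • fun i => v (⟨p-1, by omega⟩, i)) (fun i => v (⟨0, by omega⟩, i))
        : Fin m ⊕ Fin m → ℂ) = 0 → v = 0) := by
  have hp0 : 0 < p := by omega
  set w0 : Fin m → ℂ := τ⁻¹ • fun i => v (⟨p-1, by omega⟩, i) with hw0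
  set w1 : Fin m → ℂ := fun i => v (⟨0, by omega⟩, i) with hw1
  set Y : ℕ → Fin m → ℂ := fun n =>
    if hn : n = 0 then w0
    else if hn2 : n ≤ p then (fun i => v (⟨n-1, by omega⟩, i))
    else τ • w1 with hY
  have hY0 : Y 0 = w0 := by simp [hY]
  have hY1 : Y 1 = w1 := by
    simp only [hY]
    rw [dif_neg one_ne_zero, dif_pos (by omega : 1 ≤ p)]
  have hYmid : ∀ n (h1 : 1 ≤ n) (h2 : n ≤ p),
      Y n = fun i => v (⟨n-1, Nat.lt_of_lt_of_le (Nat.sub_lt (by omega) one_pos) h2⟩, i) := by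
    intro n h1 h2
    simp only [hY]
    rw [dif_neg (by omega), dif_pos h2]
  have hYtop : Y (p+1) = τ • w1 := by
    simp only [hY]
    rw [dif_neg (by omega), dif_neg (by omega)]
  have ha0p : a 0 = a p := by
    have h := (hper 0).1; rw [zero_add] at h; exact h.symm
  -- the recursion
  have hrec : ∀ n, 1 ≤ n → n ≤ p →
      a n *ᵥ Y (n + 1) + b n *ᵥ Y n + a (n - 1) *ᵥ Y (n - 1) = z • Y n := by
    intro n h1 h2
    obtain ⟨j, rfl⟩ : ∃ j : Fin p, n = (j:ℕ)+1 := ⟨⟨n-1, by omega⟩, by simp; omega⟩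
    have hrow := row_eq hp a b τ z v hv j
    simp only [Nat.add_sub_cancel]
    rw [hYmid ((j:ℕ)+1) (by omega) h2]
    have hfin : (⟨(j:ℕ)+1-1, Nat.lt_of_lt_of_le (Nat.sub_lt (by omega) one_pos) h2⟩ : Fin p) = j := by
      ext; simp
    rw [hfin]
    by_cases hfirst : (j:ℕ) = 0
    · -- n = 1
      have hjlt : (j:ℕ)+1 < p := by omega
      rw [dif_pos hjlt, if_neg (by omega), if_pos hfirst, if_neg (by omega)] at hrow
      have hY2 : Y ((j:ℕ)+1+1) = fun i => v (⟨(j:ℕ)+1, hjlt⟩, i) := by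
        rw [hYmid ((j:ℕ)+1+1) (by omega) (by omega)]; rfl
      have hY0' : Y ((j:ℕ)) = w0 := by rw [hfirst]; exact hY0
      have haj : a ((j:ℕ)) = a p := by rw [hfirst, ha0p]
      rw [hY2, hY0', haj, hw0, Matrix.mulVec_smul, ← hrow]
      abel
    · by_cases hlast : (j:ℕ) = p - 1
      · -- n = p
        rw [dif_neg (by omega), if_pos (by omega), if_neg hfirst, if_pos hlast] at hrow
        have hY2 : Y ((j:ℕ)+1+1) = τ • w1 := by
          have he : (j:ℕ)+1+1 = p+1 := by omega
          rw [he, hYtop]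
        have hY0' : Y ((j:ℕ)) = fun i => v (⟨(j:ℕ)-1, lt_of_le_of_lt (Nat.sub_le _ _) j.2⟩, i) := by
          rw [hYmid ((j:ℕ)) (by omega) (by omega)]
        have hap : a ((j:ℕ)+1) = a p := by rw [show (j:ℕ)+1 = p by omega]
        rw [hY2, hY0', hap, hw1, Matrix.mulVec_smul, ← hrow]
        abel
      · -- middle
        have hjlt : (j:ℕ)+1 < p := by omega
        rw [dif_pos hjlt, if_pos (by omega), if_neg hfirst, if_neg hlast] at hrow
        have hY2 : Y ((j:ℕ)+1+1) = fun i => v (⟨(j:ℕ)+1, hjlt⟩, i) := by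
          rw [hYmid ((j:ℕ)+1+1) (by omega) (by omega)]; rfl
        have hY0' : Y ((j:ℕ)) = fun i => v (⟨(j:ℕ)-1, lt_of_le_of_lt (Nat.sub_le _ _) j.2⟩, i) := by
          rw [hYmid ((j:ℕ)) (by omega) (by omega)]
        rw [hY2, hY0', ← hrow]
        abel
  have husol := sol_unique a b haU z p Y hrec
  have hYp : Y p = τ • w0 := by
    rw [hYmid p (by omega) le_rfl, hw0, smul_smul, mul_inv_cancel₀ hτ0, one_smul]
  constructor
  · -- part 1
    have h1 := husol p (by omega)
    have h2 := husol (p+1) (by omega)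
    rw [Mmat, Matrix.fromBlocks_mulVec]
    have hcl : (Sum.elim w0 w1 ∘ Sum.inl) = w0 := rfl
    have hcr : (Sum.elim w0 w1 ∘ Sum.inr) = w1 := rfl
    rw [hcl, hcr, ← hY0, ← hY1, ← h1, ← h2, hYp, hYtop, hY0, hY1]
    funext x
    cases x <;> rfl
  · -- part 2
    intro hS
    have hw0z : w0 = 0 := funext fun i => congrFun hS (Sum.inl i)
    have hw1z : w1 = 0 := funext fun i => congrFun hS (Sum.inr i)
    have hzero : ∀ n, n ≤ p + 1 → Y n = 0 := by
      intro n hn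
      rw [husol n hn, hY0, hY1, hw0z, hw1z]
      simp
    funext x
    obtain ⟨k, i⟩ := x
    have h5 := hzero ((k:ℕ)+1) (by have := k.2; omega)
    rw [hYmid ((k:ℕ)+1) (by omega) k.2] at h5
    have := congrFun h5 i
    simpa using this

noncomputable def Smap (p m : ℕ) (hp : 0 < p) (τ : ℂ) :
    (Fin p × Fin m → ℂ) →ₗ[ℂ] (Fin m ⊕ Fin m → ℂ) where
  toFun v := Sum.elim (τ⁻¹ • fun i => v (⟨p-1, Nat.sub_lt hp one_pos⟩, i))
    (fun i => v (⟨0, hp⟩, i))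
  map_add' u w := by funext x; cases x <;> simp [mul_add]
  map_smul' c w := by
    funext x
    cases x <;> (simp [smul_eq_mul]; try ring)

/-- Let `τ ∈ {1, −1}` and let `lam ∈ ℝ` be an eigenvalue of the Hermitian
matrix `K_p(τ)` of multiplicity `2m` (multiplicity counted in the multiset of eigenvalues
of `K_p(τ)`).  Then the characteristic polynomial of the monodromy matrix `M_p(lam)` equals
`(X − τ)^{2m}`; that is, every eigenvalue of `M_p(lam)` equals `τ`. -/
theorem stmt9 (m p : ℕ) (hm : 1 ≤ m) (hp : 2 ≤ p)
    (a b : ℕ → Matrix (Fin m) (Fin m) ℂ)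
    (hper : ∀ n, a (n + p) = a n ∧ b (n + p) = b n)
    (ha : ∀ n, (a n).PosDef) (hb : ∀ n, (b n).IsHermitian)
    (τ : ℂ) (hτ : τ = 1 ∨ τ = -1)
    (hH : (Kmat p m a b τ).IsHermitian)
    (lam : ℝ)
    (hmult : Multiset.count lam (Finset.univ.val.map hH.eigenvalues) = 2 * m) :
    (Mmat p a b (lam : ℂ)).charpoly = (X - C τ) ^ (2 * m) := by
  classical
  have hτ0 : τ ≠ 0 := by rcases hτ with h | h <;> (rw [h]; norm_num)
  have haU : ∀ n, IsUnit (a n) := fun n => (ha n).isUnit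
  have hp0 : 0 < p := by omega
  set z := (lam : ℂ) with hz
  set S := Smap p m hp0 τ with hSdef
  -- cardinality of the eigenvalue-lam index set
  have hcard : Fintype.card {i : Fin p × Fin m // lam = hH.eigenvalues i} = 2 * m := by
    rw [Fintype.card_subtype, ← hmult, Multiset.count_map]
    rfl
  -- the family of eigenvectors
  set e := (WithLp.linearEquiv 2 ℂ ((Fin p × Fin m) → ℂ)) with he
  set f : {i : Fin p × Fin m // lam = hH.eigenvalues i} → (Fin p × Fin m → ℂ) :=
    fun i => e (hH.eigenvectorBasis i.1) with hf
  have hf_eig : ∀ i, Kmat p m a b τ *ᵥ f i = z • f i := by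
    intro i
    have h := hH.mulVec_eigenvectorBasis i.1
    have h2 : (hH.eigenvalues i.1 : ℝ) • ⇑(hH.eigenvectorBasis i.1)
        = z • e (hH.eigenvectorBasis i.1) := by
      funext x
      rw [Pi.smul_apply, Pi.smul_apply]
      rw [← i.2, Complex.real_smul, hz, smul_eq_mul]
      rfl
    exact h.trans h2
  have li : LinearIndependent ℂ f := by
    have h0 : LinearIndependent ℂ (fun j : Fin p × Fin m => e (hH.eigenvectorBasis j)) := by
      have h1 := (hH.eigenvectorBasis.toBasis).linearIndependent
      rw [OrthonormalBasis.coe_toBasis] at h1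
      exact h1.map' e.toLinearMap e.ker
    exact h0.comp Subtype.val Subtype.val_injective
  -- key transfer
  have hkey : ∀ v : Fin p × Fin m → ℂ, Kmat p m a b τ *ᵥ v = z • v →
      (Mmat p a b z *ᵥ S v = τ • S v ∧ (S v = 0 → v = 0)) := by
    intro v hv
    exact key hp a b hper haU τ z hτ0 v hv
  -- the eigenspace of K as a kernel
  set Esub : Submodule ℂ (Fin p × Fin m → ℂ) :=
    LinearMap.ker ((Kmat p m a b τ).mulVecLin - z • LinearMap.id) with hE
  have hmemE : ∀ v, v ∈ Esub ↔ Kmat p m a b τ *ᵥ v = z • v := by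
    intro v
    simp [hE, LinearMap.mem_ker, LinearMap.sub_apply, Matrix.mulVecLin_apply, sub_eq_zero]
  set W : Submodule ℂ (Fin m ⊕ Fin m → ℂ) :=
    LinearMap.ker ((Mmat p a b z).mulVecLin - τ • LinearMap.id) with hW
  have hmemW : ∀ w, w ∈ W ↔ Mmat p a b z *ᵥ w = τ • w := by
    intro w
    simp [hW, LinearMap.mem_ker, LinearMap.sub_apply, Matrix.mulVecLin_apply, sub_eq_zero]
  have hrange : ∀ i, f i ∈ Esub := fun i => (hmemE _).mpr (hf_eig i)
  have hdisj : Disjoint (Submodule.span ℂ (Set.range f)) (LinearMap.ker S) := by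
    rw [Submodule.disjoint_def]
    intro x hx hker
    have hxE : x ∈ Esub := Submodule.span_le.mpr (Set.range_subset_iff.mpr hrange) hx
    exact (hkey x ((hmemE x).mp hxE)).2 (LinearMap.mem_ker.mp hker)
  have li2 : LinearIndependent ℂ (⇑S ∘ f) := li.map hdisj
  set g : {i : Fin p × Fin m // lam = hH.eigenvalues i} → W :=
    fun i => ⟨S (f i), (hmemW _).mpr (hkey (f i) (hf_eig i)).1⟩ with hg
  have lig : LinearIndependent ℂ g := by
    apply LinearIndependent.of_comp W.subtype
    exact li2
  have hfr : 2 * m ≤ Module.finrank ℂ W := by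
    calc 2 * m = Fintype.card {i : Fin p × Fin m // lam = hH.eigenvalues i} := hcard.symm
    _ ≤ Module.finrank ℂ W := lig.fintype_card_le_finrank
  have hdim : Module.finrank ℂ (Fin m ⊕ Fin m → ℂ) = 2 * m := by
    rw [Module.finrank_pi]
    simp [two_mul]
  have hWtop : W = ⊤ := by
    apply Submodule.eq_top_of_finrank_eq
    have hle : Module.finrank ℂ W ≤ Module.finrank ℂ (Fin m ⊕ Fin m → ℂ) :=
      Submodule.finrank_le W
    omega
  have hML : (Mmat p a b z).mulVecLin - τ • LinearMap.id = 0 := LinearMap.ker_eq_top.mp hWtop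
  have hMv : ∀ w, Mmat p a b z *ᵥ w = τ • w := by
    intro w
    have h := DFunLike.congr_fun hML w
    simpa [LinearMap.sub_apply, Matrix.mulVecLin_apply, sub_eq_zero] using h
  have hM : Mmat p a b z = τ • (1 : Matrix (Fin m ⊕ Fin m) (Fin m ⊕ Fin m) ℂ) := by
    ext x y
    have h1 : (Mmat p a b z *ᵥ Pi.single y 1) = τ • (Pi.single y 1 : Fin m ⊕ Fin m → ℂ) :=
      hMv _
    rw [Matrix.mulVec_single] at h1
    have h2 := congrFun h1 x
    simp only [Pi.smul_apply, smul_eq_mul, mul_one, Pi.single_apply, MulOpposite.op_one, one_smul, Matrix.col_apply] at h2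
    rw [h2, Matrix.smul_apply, Matrix.one_apply]
    simp [mul_ite]
  rw [hM, Matrix.charpoly]
  have hcm : charmatrix (τ • (1 : Matrix (Fin m ⊕ Fin m) (Fin m ⊕ Fin m) ℂ))
      = Matrix.diagonal (fun _ => (X : ℂ[X]) - C τ) := by
    ext x y
    by_cases hxy : x = y
    · subst hxy
      rw [Matrix.charmatrix_apply_eq, Matrix.diagonal_apply_eq]
      simp [Matrix.smul_apply, Matrix.one_apply]
    · rw [Matrix.charmatrix_apply_ne _ _ _ hxy, Matrix.diagonal_apply_ne _ hxy]
      simp [Matrix.smul_apply, Matrix.one_apply, hxy]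
  rw [hcm, Matrix.det_diagonal, Finset.prod_const, Finset.card_univ]
  congr 1
  simp [two_mul]
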